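/- arXiv:1111.4729 — 2 statements merged into one kernel-verified Lean document; each statement's English description precedes it below -/
import Mathlib

section
/- Suppose G is an ergodic signed digraph in which, for every pair of vertices i, j, all directed paths from i to j of even length have the same sign. Then G is either balanced or anti-balanced. -/
open Matrix Filter Topology Finset

/-- A directed walk of given length in a digraph with edge relation `E`. -/
def DiWalk {V : Type*} (E : V → V → Prop) : ℕ → V → V → Prop
  | 0, i, j => i = j
  | n + 1, i, j => ∃ k, E i k ∧ DiWalk E n k j

/-- Strong connectivity: every node reaches every other node by some walk. -/
def DiStronglyConnected {V : Type*} (E : V → V → Prop) : Prop :=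
  ∀ i j : V, ∃ n : ℕ, DiWalk E n i j

/-- Aperiodicity: the gcd of the lengths of all (positive-length) closed walks is 1. -/
def DiAperiodic {V : Type*} (E : V → V → Prop) : Prop :=
  ∀ d : ℕ, (∀ n : ℕ, 0 < n → (∃ i, DiWalk E n i i) → d ∣ n) → d = 1

/-- A signed directed walk of given length and total sign `s` (product of edge signs). -/
def SWalk {V : Type*} (E : V → V → Prop) (σ : V → V → ℤ) : ℕ → ℤ → V → V → Prop
  | 0, s, i, j => i = j ∧ s = 1
  | n + 1, s, i, j => ∃ k s', E i k ∧ SWalk E σ n s' k j ∧ s = σ i k * s'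

/-- Balanced signed digraph: a bipartition with positive edges inside parts,
negative edges across. -/
def SBalancedG {V : Type*} (E : V → V → Prop) (σ : V → V → ℤ) : Prop :=
  ∃ S : Set V, ∀ i j, E i j → (σ i j = 1 ↔ (i ∈ S ↔ j ∈ S))

/-- Anti-balanced signed digraph: negative edges inside parts, positive edges across. -/
def SAntiBalancedG {V : Type*} (E : V → V → Prop) (σ : V → V → ℤ) : Prop :=
  ∃ S : Set V, ∀ i j, E i j → (σ i j = -1 ↔ (i ∈ S ↔ j ∈ S))

theorem swalk_of_diwalk {V : Type*} {E : V → V → Prop} (σ : V → V → ℤ) :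
    ∀ {n : ℕ} {i j : V}, DiWalk E n i j → ∃ s, SWalk E σ n s i j := by
  intro n
  induction n with
  | zero => intro i j h; exact ⟨1, h, rfl⟩
  | succ n ih =>
    intro i j h
    obtain ⟨k, hik, hw⟩ := h
    obtain ⟨s, hs⟩ := ih hw
    exact ⟨σ i k * s, k, s, hik, hs, rfl⟩

theorem swalk_sign {V : Type*} {E : V → V → Prop} {σ : V → V → ℤ}
    (hσ : ∀ i j, E i j → σ i j = 1 ∨ σ i j = -1) :
    ∀ {n : ℕ} {s : ℤ} {i j : V}, SWalk E σ n s i j → s = 1 ∨ s = -1 := by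
  intro n
  induction n with
  | zero => intro s i j h; exact Or.inl h.2
  | succ n ih =>
    intro s i j h
    obtain ⟨k, s', hik, hw, hs⟩ := h
    rcases hσ i k hik with h1 | h1 <;> rcases ih hw with h2 | h2 <;>
      rw [hs, h1, h2] <;> norm_num

theorem swalk_append {V : Type*} {E : V → V → Prop} {σ : V → V → ℤ} :
    ∀ {n m : ℕ} {s t : ℤ} {i j k : V},
      SWalk E σ n s i j → SWalk E σ m t j k → SWalk E σ (n + m) (s * t) i k := by
  intro n
  induction n with
  | zero =>
    intro m s t i j k h1 h2
    obtain ⟨rfl, rfl⟩ := h1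
    simpa using h2
  | succ n ih =>
    intro m s t i j k h1 h2
    obtain ⟨k', s', hik, hw, hs⟩ := h1
    have : (n + 1 + m) = (n + m) + 1 := by omega
    rw [this]
    exact ⟨k', s' * t, hik, ih hw h2, by rw [hs]; ring⟩

/-- If in an ergodic signed digraph, for every pair of vertices all even-length
paths between them have the same sign, then the graph is balanced or anti-balanced. -/
theorem even_paths_same_sign_imp_balanced_or_antibalanced {V : Type*}
    (E : V → V → Prop) (σ : V → V → ℤ)
    (hσ : ∀ i j, E i j → σ i j = 1 ∨ σ i j = -1)
    (hsc : DiStronglyConnected E) (hap : DiAperiodic E)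
    (heven : ∀ (i j : V) (n m : ℕ) (s s' : ℤ), 0 < n → 0 < m → Even n → Even m →
      SWalk E σ n s i j → SWalk E σ m s' i j → s = s') :
    SBalancedG E σ ∨ SAntiBalancedG E σ := by
  rcases isEmpty_or_nonempty V with hV | hV
  · exact Or.inl ⟨∅, fun i j _ => (hV.elim i)⟩
  obtain ⟨v0⟩ := hV
  -- there is an odd closed walk somewhere
  have h2 : ¬ (∀ n : ℕ, 0 < n → (∃ i, DiWalk E n i i) → 2 ∣ n) := by
    intro h; have := hap 2 h; omega
  push_neg at h2
  obtain ⟨c, hc0, ⟨w, hw⟩, hc2⟩ := h2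
  obtain ⟨q, hq⟩ := swalk_of_diwalk σ hw
  have hcodd : c % 2 = 1 := by omega
  -- even positive walks exist between any two vertices
  have evwalk : ∀ i j : V, ∃ n s, 0 < n ∧ Even n ∧ SWalk E σ n s i j := by
    intro i j
    obtain ⟨a, ha⟩ := hsc i w
    obtain ⟨b, hb⟩ := hsc w j
    obtain ⟨sa, hsa⟩ := swalk_of_diwalk σ ha
    obtain ⟨sb, hsb⟩ := swalk_of_diwalk σ hb
    rcases Nat.even_or_odd (a + b) with hab | hab
    · refine ⟨a + (c + (c + b)), sa * (q * (q * sb)), by omega, ?_, ?_⟩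
      · rw [Nat.even_iff] at hab ⊢; omega
      · exact swalk_append hsa (swalk_append hq (swalk_append hq hsb))
    · refine ⟨a + (c + b), sa * (q * sb), by omega, ?_, ?_⟩
      · rw [Nat.odd_iff] at hab; rw [Nat.even_iff]; omega
      · exact swalk_append hsa (swalk_append hq hsb)
  choose nn sg hpos hev hwalk using fun i => evwalk v0 i
  choose mm tg hpos' hev' hwalk' using fun i => evwalk i v0
  have key : ∀ (i : V) (n : ℕ) (s : ℤ), 0 < n → Even n → SWalk E σ n s v0 i → s = sg i :=
    fun i n s h1 h2 hww =>
      heven v0 i n (nn i) s (sg i) h1 (hpos i) h2 (hev i) hww (hwalk i)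
  have hsg : ∀ i, sg i = 1 ∨ sg i = -1 := fun i => swalk_sign hσ (hwalk i)
  have hsg0 : sg v0 = 1 := by
    have h := key v0 (nn v0 + nn v0) (sg v0 * sg v0) (by have := hpos v0; omega)
      ⟨nn v0, rfl⟩ (swalk_append (hwalk v0) (hwalk v0))
    rcases hsg v0 with h1 | h1
    · exact h1
    · rw [h1] at h; norm_num at h
  have htg : ∀ i, tg i = sg i := by
    intro i
    have h := key v0 (nn i + mm i) (sg i * tg i) (by have := hpos i; omega)
      (Even.add (hev i) (hev' i)) (swalk_append (hwalk i) (hwalk' i))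
    rw [hsg0] at h
    rcases hsg i with h1 | h1 <;> rw [h1] at h ⊢ <;> linarith
  -- a fixed odd closed walk at v0
  set N0 : ℕ := nn w + (c + mm w) with hN0
  set δ : ℤ := sg w * (q * tg w) with hδ
  have hW0 : SWalk E σ N0 δ v0 v0 := swalk_append (hwalk w) (swalk_append hq (hwalk' w))
  have hN0odd : N0 % 2 = 1 := by
    have h1 := Nat.even_iff.mp (hev w)
    have h2 := Nat.even_iff.mp (hev' w)
    omega
  have hδs : δ = 1 ∨ δ = -1 := swalk_sign hσ hW0
  -- any odd closed walk at v0 has sign δ⁻¹ = δ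
  have hodd : ∀ (n : ℕ) (u : ℤ), n % 2 = 1 → SWalk E σ n u v0 v0 → u * δ = 1 := by
    intro n u hn hu
    have h := key v0 (n + N0) (u * δ) (by omega)
      (Nat.even_iff.mpr (by omega)) (swalk_append hu hW0)
    rw [hsg0] at h
    exact h
  -- the key edge equation
  have hedge : ∀ i j, E i j → sg i * (σ i j * tg j) * δ = 1 := by
    intro i j hij
    have he1 : SWalk E σ 1 (σ i j) i j := ⟨j, 1, hij, ⟨rfl, rfl⟩, (mul_one _).symm⟩
    have hww : SWalk E σ (nn i + (1 + mm j)) (sg i * (σ i j * tg j)) v0 v0 :=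
      swalk_append (hwalk i) (swalk_append he1 (hwalk' j))
    refine hodd _ _ ?_ hww
    have h1 := Nat.even_iff.mp (hev i)
    have h2 := Nat.even_iff.mp (hev' j)
    omega
  rcases hδs with hd | hd
  · left
    refine ⟨{i | sg i = 1}, fun i j hij => ?_⟩
    have h := hedge i j hij
    rw [htg j, hd] at h
    simp only [Set.mem_setOf_eq]
    rcases hsg i with h1 | h1 <;> rcases hsg j with h2 | h2 <;>
      rcases hσ i j hij with h3 | h3 <;> rw [h1, h2, h3] at h ⊢ <;>
      revert h <;> norm_num
  · right
    refine ⟨{i | sg i = 1}, fun i j hij => ?_⟩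
    have h := hedge i j hij
    rw [htg j, hd] at h
    simp only [Set.mem_setOf_eq]
    rcases hsg i with h1 | h1 <;> rcases hsg j with h2 | h2 <;>
      rcases hσ i j hij with h3 | h3 <;> rw [h1, h2, h3] at h ⊢ <;>
      revert h <;> norm_num
end

section
/- Let G be an ergodic balanced signed digraph with partition S, S̄. Then the voter model steady state is x = 1̂_S π̂_S^T (x_0 - (1/2)1) + (1/2)1, where π is the stationary distribution of the unsigned chain. -/
open Matrix Filter Topology Finset

/-- Weighted out-degree `d_i = Σ_j |A_{ij}|` of a signed weighted digraph. -/
noncomputable def sdeg {V : Type*} [Fintype V] (A : Matrix V V ℝ) (i : V) : ℝ :=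
  ∑ j, |A i j|

/-- The signed transition matrix `P = D⁻¹A`. -/
noncomputable def signedP {V : Type*} [Fintype V] (A : Matrix V V ℝ) : Matrix V V ℝ :=
  Matrix.of fun i j => A i j / sdeg A i

/-- The unsigned transition matrix `P̄ = D⁻¹|A|`. -/
noncomputable def unsignedP {V : Type*} [Fintype V] (A : Matrix V V ℝ) : Matrix V V ℝ :=
  Matrix.of fun i j => |A i j| / sdeg A i

/-- The vector `g⁻ = D⁻¹A⁻1` of weighted fractions of outgoing negative edges. -/
noncomputable def gneg {V : Type*} [Fintype V] (A : Matrix V V ℝ) (i : V) : ℝ :=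
  (∑ j, max (-(A i j)) 0) / sdeg A i

/-- Ergodicity of the underlying (unsigned) digraph of a weighted signed digraph. -/
def SErgodic {V : Type*} (A : Matrix V V ℝ) : Prop :=
  DiStronglyConnected (fun i j => A i j ≠ 0) ∧ DiAperiodic (fun i j => A i j ≠ 0)

/-- Balanced weighted signed digraph. -/
def SBalancedM {V : Type*} (A : Matrix V V ℝ) : Prop :=
  ∃ S : Set V, ∀ i j, A i j ≠ 0 → (0 < A i j ↔ (i ∈ S ↔ j ∈ S))

/-- Anti-balanced weighted signed digraph. -/
def SAntiBalancedM {V : Type*} (A : Matrix V V ℝ) : Prop :=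
  ∃ S : Set V, ∀ i j, A i j ≠ 0 → (A i j < 0 ↔ (i ∈ S ↔ j ∈ S))

/-- `π` is a stationary distribution of the unsigned chain `P̄ = D⁻¹|A|`. -/
def SStationary {V : Type*} [Fintype V] (A : Matrix V V ℝ) (π : V → ℝ) : Prop :=
  (∀ i, 0 ≤ π i) ∧ (∑ i, π i = 1) ∧ ∀ j, ∑ i, π i * unsignedP A i j = π j

lemma aux_diwalk_trans {V : Type*} {E : V → V → Prop} :
    ∀ {n m : ℕ} {i j k : V}, DiWalk E n i j → DiWalk E m j k → DiWalk E (n + m) i k := by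
  intro n
  induction n with
  | zero =>
    intro m i j k h1 h2
    have h : i = j := h1
    subst h
    rw [Nat.zero_add]
    exact h2
  | succ n ih =>
    intro m i j k h1 h2
    obtain ⟨u, hu, hw⟩ := h1
    have h : n + 1 + m = (n + m) + 1 := by omega
    rw [h]
    exact ⟨u, hu, ih hw h2⟩

lemma aux_first_edge {V : Type*} {E : V → V → Prop} {n : ℕ} {i j : V}
    (h : DiWalk E n i j) (hn : 0 < n) : ∃ k, E i k := by
  cases n with
  | zero => omega
  | succ n => obtain ⟨k, hk, _⟩ := h; exact ⟨k, hk⟩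

lemma aux_exists_pos_closed {V : Type*} {E : V → V → Prop} (hap : DiAperiodic E) :
    ∃ n : ℕ, 0 < n ∧ ∃ i, DiWalk E n i i := by
  by_contra h
  push_neg at h
  have h2 : (2 : ℕ) = 1 := hap 2 (fun n hn hw => absurd hw (by
    intro ⟨i, hi⟩
    exact h n hn i hi))
  omega

lemma aux_nt (R : Set ℕ) (hpos : ∀ n ∈ R, 0 < n) (hne : ∃ m, m ∈ R)
    (hadd : ∀ a ∈ R, ∀ b ∈ R, a + b ∈ R)
    (hgcd : ∀ d : ℕ, (∀ n ∈ R, d ∣ n) → d = 1) :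
    ∃ T, 0 < T ∧ ∀ n, T ≤ n → n ∈ R := by
  have hmul : ∀ (k a : ℕ), a ∈ R → (k + 1) * a ∈ R := by
    intro k
    induction k with
    | zero => intro a ha; simpa using ha
    | succ k ih =>
      intro a ha
      have h1 := hadd _ (ih a ha) _ ha
      have h2 : (k + 1 + 1) * a = (k + 1) * a + a := by ring
      rw [h2]; exact h1
  have hmul' : ∀ (q a : ℕ), 0 < q → a ∈ R → q * a ∈ R := by
    intro q a hq ha
    have := hmul (q - 1) a ha
    rwa [Nat.sub_add_cancel hq] at this
  obtain ⟨m, hm⟩ := hne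
  set D : Set ℕ := {r | 0 < r ∧ ∃ a ∈ R, ∃ b ∈ R, a = b + r} with hD
  have hDne : D.Nonempty := ⟨m, hpos m hm, m + m, hadd m hm m hm, m, hm, rfl⟩
  obtain ⟨hd0, a, ha, b, hb, hab⟩ := Nat.sInf_mem hDne
  set d := sInf D with hd
  have hdvd : ∀ n ∈ R, d ∣ n := by
    intro n hn
    by_contra hdvd
    have hr1 : 0 < n % d := Nat.pos_of_ne_zero (fun h => hdvd (Nat.dvd_of_mod_eq_zero h))
    have hr2 : n % d < d := Nat.mod_lt _ hd0
    have hqd : d * (n / d) + n % d = n := Nat.div_add_mod n d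
    rcases Nat.eq_zero_or_pos (n / d) with hq | hq
    · rw [hq, Nat.mul_zero] at hqd
      have hmem : n % d ∈ D := ⟨hr1, n + b, hadd n hn b hb, b, hb, by omega⟩
      have := Nat.sInf_le hmem
      omega
    · have hqa : n / d * a ∈ R := hmul' _ _ hq ha
      have hqb : n / d * b ∈ R := hmul' _ _ hq hb
      have hmem : n % d ∈ D := by
        refine ⟨hr1, n + n / d * b, hadd n hn _ hqb, n / d * a, hqa, ?_⟩
        have h5 : n / d * a = n / d * b + n / d * d := by rw [hab]; ring
        have h6 : n / d * d = d * (n / d) := Nat.mul_comm _ _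
        omega
      have := Nat.sInf_le hmem
      omega
  have hd1 : d = 1 := hgcd d hdvd
  rw [hd1] at hab
  have hb0 : 0 < b := hpos b hb
  refine ⟨b * b, by positivity, ?_⟩
  intro n hnb
  set q := n / b with hqdef
  set r := n % b with hrdef
  have hrb : r < b := Nat.mod_lt _ hb0
  have hqb : b ≤ q := (Nat.le_div_iff_mul_le hb0).2 hnb
  have hrq : r ≤ q := by omega
  obtain ⟨s, hs⟩ : ∃ s, q = s + r := ⟨q - r, by omega⟩
  have hn1 : n = b * q + r := (Nat.div_add_mod n b).symm
  have hkey : n = s * b + r * (b + 1) := by rw [hn1, hs]; ring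
  rcases Nat.eq_zero_or_pos r with hr0 | hrpos
  · have hspos : 0 < s := by omega
    have : s * b ∈ R := hmul' _ _ hspos hb
    rw [hkey, hr0]; simpa using this
  · have hra : r * (b + 1) ∈ R := by
      have := hmul' r (b + 1) hrpos (hab ▸ ha)
      exact this
    rcases Nat.eq_zero_or_pos s with hs0 | hspos
    · rw [hkey, hs0]; simpa using hra
    · rw [hkey]
      exact hadd _ (hmul' _ _ hspos hb) _ hra

lemma aux_uniform_walk {V : Type*} [Fintype V] {E : V → V → Prop}
    (hsc : DiStronglyConnected E) (hap : DiAperiodic E) :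
    ∃ N, 0 < N ∧ ∀ i j, DiWalk E N i j := by
  obtain ⟨n0, hn0, u, hu⟩ := aux_exists_pos_closed hap
  set R : Set ℕ := {n | 0 < n ∧ DiWalk E n u u} with hR
  have hpos : ∀ n ∈ R, 0 < n := fun n hn => hn.1
  have hne : ∃ m, m ∈ R := ⟨n0, hn0, hu⟩
  have hadd : ∀ a ∈ R, ∀ b ∈ R, a + b ∈ R := fun a ha b hb =>
    ⟨by have := ha.1; have := hb.1; omega, aux_diwalk_trans ha.2 hb.2⟩
  have hgcd : ∀ d, (∀ n ∈ R, d ∣ n) → d = 1 := by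
    intro d hd
    apply hap d
    rintro n hn ⟨i, hi⟩
    obtain ⟨a, hav⟩ := hsc u i
    obtain ⟨b, hbv⟩ := hsc i u
    rcases Nat.eq_zero_or_pos (a + b) with h0 | hab
    · have ha0 : a = 0 := by omega
      have hb0 : b = 0 := by omega
      subst ha0
      have heq : u = i := hav
      subst heq
      exact hd n ⟨hn, hi⟩
    · have h1 : a + b ∈ R := ⟨hab, aux_diwalk_trans hav hbv⟩
      have h2 : a + (n + b) ∈ R := ⟨by omega, aux_diwalk_trans hav (aux_diwalk_trans hi hbv)⟩
      have hd1 := hd _ h1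
      have hd2 := hd _ h2
      have := Nat.dvd_sub hd2 hd1
      have heq : a + (n + b) - (a + b) = n := by omega
      rwa [heq] at this
  obtain ⟨T, hT0, hT⟩ := aux_nt R hpos hne hadd hgcd
  choose f hf using fun i => hsc i u
  choose g hg using fun j => hsc u j
  set Sa := Finset.univ.sup f with hSa
  set Sb := Finset.univ.sup g with hSb
  refine ⟨T + Sa + Sb, by omega, ?_⟩
  intro i j
  have hai : f i ≤ Sa := Finset.le_sup (Finset.mem_univ i)
  have hbj : g j ≤ Sb := Finset.le_sup (Finset.mem_univ j)
  have hmid : (T + Sa + Sb) - f i - g j ∈ R := hT _ (by omega)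
  have hw := aux_diwalk_trans (hf i) (aux_diwalk_trans hmid.2 (hg j))
  have heq : f i + ((T + Sa + Sb - f i - g j) + g j) = T + Sa + Sb := by omega
  rwa [heq] at hw

lemma aux_contract {V : Type*} [Fintype V] [DecidableEq V] [Nonempty V] (Q : Matrix V V ℝ) (δ : ℝ)
    (hδ0 : 0 ≤ δ) (hδ : ∀ i j, δ ≤ Q i j) (hrow : ∀ i, ∑ j, Q i j = 1) (w : V → ℝ) :
    Finset.univ.sup' Finset.univ_nonempty (Q.mulVec w)
      - Finset.univ.inf' Finset.univ_nonempty (Q.mulVec w)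
      ≤ (1 - 2 * δ) *
        (Finset.univ.sup' Finset.univ_nonempty w - Finset.univ.inf' Finset.univ_nonempty w) := by
  set mx := Finset.univ.sup' Finset.univ_nonempty w with hmx
  set mn := Finset.univ.inf' Finset.univ_nonempty w with hmn
  have hQ0 : ∀ i j, 0 ≤ Q i j := fun i j => le_trans hδ0 (hδ i j)
  obtain ⟨j0, -, hj0⟩ := Finset.exists_mem_eq_inf' Finset.univ_nonempty w
  obtain ⟨j1, -, hj1⟩ := Finset.exists_mem_eq_sup' Finset.univ_nonempty w
  have hwle : ∀ j, w j ≤ mx := fun j => Finset.le_sup' w (Finset.mem_univ j)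
  have hwge : ∀ j, mn ≤ w j := fun j => Finset.inf'_le w (Finset.mem_univ j)
  have hmm : mn ≤ mx := le_trans (hwge (Classical.arbitrary V)) (hwle _)
  have key : ∀ (j' : V), w j' = mn → ∀ i, (Q.mulVec w) i ≤ mx - δ * (mx - mn) := by
    intro j' hj' i
    have h1 : (Q.mulVec w) i = Q i j' * w j' + ∑ j ∈ Finset.univ.erase j', Q i j * w j := by
      simp only [Matrix.mulVec, dotProduct]
      exact (Finset.add_sum_erase _ _ (Finset.mem_univ j')).symm
    have h2 : ∑ j ∈ Finset.univ.erase j', Q i j * w j ≤ ∑ j ∈ Finset.univ.erase j', Q i j * mx :=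
      Finset.sum_le_sum (fun j _ => mul_le_mul_of_nonneg_left (hwle j) (hQ0 i j))
    have h3 : ∑ j ∈ Finset.univ.erase j', Q i j = 1 - Q i j' := by
      have h4 := Finset.add_sum_erase Finset.univ (Q i) (Finset.mem_univ j')
      rw [hrow i] at h4
      linarith
    have h5 : ∑ j ∈ Finset.univ.erase j', Q i j * mx = (1 - Q i j') * mx := by
      rw [← Finset.sum_mul, h3]
    nlinarith [hδ i j', mul_nonneg (sub_nonneg.2 (hδ i j')) (sub_nonneg.2 hmm)]
  have key2 : ∀ (j' : V), w j' = mx → ∀ i, mn + δ * (mx - mn) ≤ (Q.mulVec w) i := by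
    intro j' hj' i
    have h1 : (Q.mulVec w) i = Q i j' * w j' + ∑ j ∈ Finset.univ.erase j', Q i j * w j := by
      simp only [Matrix.mulVec, dotProduct]
      exact (Finset.add_sum_erase _ _ (Finset.mem_univ j')).symm
    have h2 : ∑ j ∈ Finset.univ.erase j', Q i j * mn ≤ ∑ j ∈ Finset.univ.erase j', Q i j * w j :=
      Finset.sum_le_sum (fun j _ => mul_le_mul_of_nonneg_left (hwge j) (hQ0 i j))
    have h3 : ∑ j ∈ Finset.univ.erase j', Q i j = 1 - Q i j' := by
      have h4 := Finset.add_sum_erase Finset.univ (Q i) (Finset.mem_univ j')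
      rw [hrow i] at h4
      linarith
    have h5 : ∑ j ∈ Finset.univ.erase j', Q i j * mn = (1 - Q i j') * mn := by
      rw [← Finset.sum_mul, h3]
    nlinarith [hδ i j', mul_nonneg (sub_nonneg.2 (hδ i j')) (sub_nonneg.2 hmm)]
  have hsup : Finset.univ.sup' Finset.univ_nonempty (Q.mulVec w) ≤ mx - δ * (mx - mn) :=
    Finset.sup'_le _ _ (fun i _ => key j0 hj0.symm i)
  have hinf : mn + δ * (mx - mn) ≤ Finset.univ.inf' Finset.univ_nonempty (Q.mulVec w) :=
    Finset.le_inf' _ _ (fun i _ => key2 j1 hj1.symm i)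
  nlinarith [hsup, hinf]

/-- For a balanced ergodic signed digraph with partition S, S̄, the voter model
steady state is `x = 1̂_S π̂_S^T (x_0 - (1/2)1) + (1/2)1`. -/
theorem balanced_ergodic_voter_steady_state {V : Type*} [Fintype V] [DecidableEq V]
    (A : Matrix V V ℝ) (S : Finset V)
    (herg : SErgodic A)
    (hbal : ∀ i j, A i j ≠ 0 → (0 < A i j ↔ (i ∈ S ↔ j ∈ S)))
    (π : V → ℝ) (hπ : SStationary A π)
    (x : ℕ → V → ℝ)
    (hx : ∀ t, x (t + 1) = (signedP A).mulVec (x t) + gneg A) :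
    Tendsto x atTop (nhds (fun i =>
      (if i ∈ S then (1 : ℝ) else -1) *
        (∑ j, (if j ∈ S then π j else -π j) * (x 0 j - 1 / 2)) + 1 / 2)) := by
  classical
  obtain ⟨hsc, hap⟩ := herg
  obtain ⟨hπ0, hπ1, hπs⟩ := hπ
  obtain ⟨n0, hn0, u, hu⟩ := aux_exists_pos_closed hap
  haveI : Nonempty V := ⟨u⟩
  have hout : ∀ i : V, ∃ k, A i k ≠ 0 := by
    intro i
    obtain ⟨m, hm⟩ := hsc i u
    rcases Nat.eq_zero_or_pos m with h0 | hp
    · subst h0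
      have he : i = u := hm
      subst he
      exact aux_first_edge hu hn0
    · exact aux_first_edge hm hp
  have hdeg : ∀ i, 0 < sdeg A i := by
    intro i
    obtain ⟨k, hk⟩ := hout i
    exact Finset.sum_pos' (fun j _ => abs_nonneg _) ⟨k, Finset.mem_univ k, abs_pos.2 hk⟩
  set M := unsignedP A with hMdef
  have hMa : ∀ i j, M i j = |A i j| / sdeg A i := fun i j => rfl
  have hM0 : ∀ i j, 0 ≤ M i j := fun i j => by
    rw [hMa]; exact div_nonneg (abs_nonneg _) (hdeg i).le
  have hMrow : ∀ i, ∑ j, M i j = 1 := by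
    intro i
    simp only [hMa]
    rw [← Finset.sum_div]
    exact div_self (ne_of_gt (hdeg i))
  have hMpos : ∀ i j, A i j ≠ 0 → 0 < M i j := fun i j h => by
    rw [hMa]; exact div_pos (abs_pos.2 h) (hdeg i)
  set σ : V → ℝ := fun i => if i ∈ S then 1 else -1 with hσdef
  have hσ2 : ∀ i, σ i * σ i = 1 := by
    intro i; by_cases h : i ∈ S <;> simp [hσdef, h]
  have hσprod : ∀ i j, A i j ≠ 0 → A i j = σ i * σ j * |A i j| := by
    intro i j h
    have hb := hbal i j h
    rcases h.lt_or_gt with hlt | hgt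
    · have hiff : ¬ (i ∈ S ↔ j ∈ S) := fun hh => absurd (hb.mpr hh) (not_lt.mpr hlt.le)
      have hs : σ i * σ j = -1 := by
        by_cases hi : i ∈ S <;> by_cases hj : j ∈ S <;> simp [hσdef, hi, hj] at hiff ⊢ <;> tauto
      rw [hs, abs_of_neg hlt]; ring
    · have hiff : (i ∈ S ↔ j ∈ S) := hb.mp hgt
      have hs : σ i * σ j = 1 := by
        by_cases hi : i ∈ S <;> by_cases hj : j ∈ S <;> simp [hσdef, hi, hj] at hiff ⊢ <;> tauto
      rw [hs, abs_of_pos hgt]; ring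
  have hsign : ∀ i j, signedP A i j = σ i * σ j * M i j := by
    intro i j
    by_cases h : A i j = 0
    · show A i j / sdeg A i = σ i * σ j * M i j
      rw [hMa, h]; simp
    · rw [hMa]
      show A i j / sdeg A i = σ i * σ j * (|A i j| / sdeg A i)
      linear_combination (sdeg A i)⁻¹ * hσprod i j h
  have hg : ∀ i, gneg A i = 1/2 - (1/2) * ∑ j, signedP A i j := by
    intro i
    have hmax : ∀ a : ℝ, max (-a) 0 = (|a| - a)/2 := by
      intro a
      rcases le_total a 0 with h | h
      · rw [abs_of_nonpos h, max_eq_left (by linarith)]; ring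
      · rw [abs_of_nonneg h, max_eq_right (by linarith)]; ring
    have hsum : ∑ j, signedP A i j = (∑ j, A i j) / sdeg A i := by
      rw [Finset.sum_div]
      exact Finset.sum_congr rfl (fun j _ => rfl)
    have h1 : (∑ j, max (-(A i j)) 0) = (sdeg A i - ∑ j, A i j)/2 := by
      simp only [hmax]
      rw [← Finset.sum_div, Finset.sum_sub_distrib]
      rfl
    show (∑ j, max (-(A i j)) 0) / sdeg A i = _
    rw [h1, hsum]
    have hd := (hdeg i).ne'
    field_simp
  set y : ℕ → V → ℝ := fun t i => σ i * (x t i - 1/2) with hydef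
  have hy : ∀ t, y (t+1) = M.mulVec (y t) := by
    intro t
    funext i
    simp only [hydef, Matrix.mulVec, dotProduct]
    have hxi : x (t+1) i = (∑ j, signedP A i j * x t j) + gneg A i := by
      rw [hx t]; simp [Matrix.mulVec, dotProduct]
    rw [hxi, hg i]
    calc σ i * ((∑ j, signedP A i j * x t j) + (1/2 - 1/2 * ∑ j, signedP A i j) - 1/2)
        = ∑ j, (σ i * (signedP A i j * x t j) - 1/2 * (σ i * signedP A i j)) := by
          rw [Finset.sum_sub_distrib, ← Finset.mul_sum, ← Finset.mul_sum, ← Finset.mul_sum]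
          ring
      _ = ∑ j, M i j * (σ j * (x t j - 1/2)) := Finset.sum_congr rfl (fun j _ => by
          rw [hsign i j]
          linear_combination (σ j * M i j * (x t j - 1/2)) * (hσ2 i))
  have hypow : ∀ (n t : ℕ), y (t + n) = (M ^ n).mulVec (y t) := by
    intro n
    induction n with
    | zero => intro t; simp
    | succ n ih =>
      intro t
      have heq : t + (n+1) = (t + n) + 1 := by omega
      rw [heq, hy (t+n), ih t, pow_succ', ← Matrix.mulVec_mulVec]
  have hpow0 : ∀ (n : ℕ) (i j : V), 0 ≤ (M ^ n) i j := by
    intro n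
    induction n with
    | zero => intro i j; rw [pow_zero]; by_cases h : i = j <;> simp [Matrix.one_apply, h]
    | succ n ih =>
      intro i j
      rw [pow_succ, Matrix.mul_apply]
      exact Finset.sum_nonneg (fun k _ => mul_nonneg (ih i k) (hM0 k j))
  have hprow : ∀ (n : ℕ) (i : V), ∑ j, (M ^ n) i j = 1 := by
    intro n
    induction n with
    | zero => intro i; simp [Matrix.one_apply]
    | succ n ih =>
      intro i
      simp only [pow_succ, Matrix.mul_apply]
      rw [Finset.sum_comm]
      have h2 : ∀ k, ∑ j, (M^n) i k * M k j = (M^n) i k := by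
        intro k; rw [← Finset.mul_sum, hMrow k, mul_one]
      rw [Finset.sum_congr rfl (fun k _ => h2 k)]
      exact ih i
  have hwpos : ∀ (n : ℕ) (i j : V), DiWalk (fun i j => A i j ≠ 0) n i j → 0 < (M ^ n) i j := by
    intro n
    induction n with
    | zero =>
      intro i j h
      have he : i = j := h
      subst he
      simp [Matrix.one_apply]
    | succ n ih =>
      intro i j h
      obtain ⟨k, hk, hw⟩ := h
      rw [pow_succ', Matrix.mul_apply]
      exact Finset.sum_pos' (fun v _ => mul_nonneg (hM0 i v) (hpow0 n v j))
        ⟨k, Finset.mem_univ k, mul_pos (hMpos i k hk) (ih k j hw)⟩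
  obtain ⟨N, hN0, hNw⟩ := aux_uniform_walk hsc hap
  set δ1 : ℝ := Finset.univ.inf' Finset.univ_nonempty
      (fun i => Finset.univ.inf' Finset.univ_nonempty (fun j => (M ^ N) i j)) with hδ1
  have hδ1pos : 0 < δ1 := by
    rw [hδ1, Finset.lt_inf'_iff]
    intro i _
    rw [Finset.lt_inf'_iff]
    intro j _
    exact hwpos N i j (hNw i j)
  have hδ1le : ∀ i j, δ1 ≤ (M ^ N) i j := fun i j =>
    le_trans (Finset.inf'_le _ (Finset.mem_univ i)) (Finset.inf'_le _ (Finset.mem_univ j))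
  set δ := min δ1 (1/2 : ℝ) with hδdef
  have hδpos : 0 < δ := lt_min hδ1pos (by norm_num)
  have hδle : ∀ i j, δ ≤ (M ^ N) i j := fun i j => le_trans (min_le_left _ _) (hδ1le i j)
  set κ := 1 - 2 * δ with hκ
  have hκ0 : 0 ≤ κ := by
    have := min_le_right δ1 (1/2 : ℝ)
    rw [hκ, hδdef]; linarith
  have hκ1 : κ < 1 := by rw [hκ]; linarith
  set osc : ℕ → ℝ := fun t => Finset.univ.sup' Finset.univ_nonempty (y t)
      - Finset.univ.inf' Finset.univ_nonempty (y t) with hoscdef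
  have hosc0 : ∀ t, 0 ≤ osc t := by
    intro t
    have h1 := le_trans (Finset.inf'_le (y t) (Finset.mem_univ (Classical.arbitrary V)))
      (Finset.le_sup' (y t) (Finset.mem_univ (Classical.arbitrary V)))
    simp only [hoscdef]
    linarith
  have hstep : ∀ t, osc (t + 1) ≤ osc t := by
    intro t
    have h := aux_contract M 0 le_rfl (fun i j => hM0 i j) hMrow (y t)
    rw [← hy t] at h
    simp only [hoscdef]
    have h2 : (1 - 2*(0:ℝ)) * (Finset.univ.sup' Finset.univ_nonempty (y t)
        - Finset.univ.inf' Finset.univ_nonempty (y t))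
        = Finset.univ.sup' Finset.univ_nonempty (y t)
          - Finset.univ.inf' Finset.univ_nonempty (y t) := by ring
    rw [h2] at h
    exact h
  have hmono : ∀ s k, osc (s + k) ≤ osc s := by
    intro s k
    induction k with
    | zero => exact le_of_eq rfl
    | succ k ih =>
      have heq : s + (k+1) = (s + k) + 1 := by omega
      rw [heq]
      exact le_trans (hstep (s + k)) ih
  have hNstep : ∀ t, osc (t + N) ≤ κ * osc t := by
    intro t
    have h := aux_contract (M ^ N) δ hδpos.le hδle (hprow N) (y t)
    rw [← hypow N t] at h
    simp only [hoscdef]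
    rw [hκ]
    exact h
  have hgeo : ∀ k, osc (k * N) ≤ κ ^ k * osc 0 := by
    intro k
    induction k with
    | zero => simp
    | succ k ih =>
      have h1 : (k + 1) * N = k * N + N := by ring
      rw [h1]
      calc osc (k * N + N) ≤ κ * osc (k * N) := hNstep (k * N)
        _ ≤ κ * (κ ^ k * osc 0) := mul_le_mul_of_nonneg_left ih hκ0
        _ = κ ^ (k+1) * osc 0 := by ring
  have hosc_le : ∀ t, osc t ≤ κ ^ (t / N) * osc 0 := by
    intro t
    have h3 : t = t / N * N + (t - t / N * N) := by
      have := Nat.div_mul_le_self t N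
      omega
    have h2 : osc t = osc (t / N * N + (t - t / N * N)) := by rw [← h3]
    rw [h2]
    exact le_trans (hmono _ _) (hgeo _)
  have hdivtop : Tendsto (fun t : ℕ => t / N) atTop atTop := by
    apply Filter.tendsto_atTop_atTop.2
    intro b
    exact ⟨b * N, fun t ht => (Nat.le_div_iff_mul_le hN0).2 ht⟩
  have hκtend : Tendsto (fun k : ℕ => κ ^ k) atTop (nhds 0) :=
    tendsto_pow_atTop_nhds_zero_of_lt_one hκ0 hκ1
  have htend1 : Tendsto (fun t : ℕ => κ ^ (t / N) * osc 0) atTop (nhds 0) := by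
    have h := (hκtend.comp hdivtop).mul_const (osc 0)
    simpa using h
  have hosctend : Tendsto osc atTop (nhds 0) := squeeze_zero hosc0 hosc_le htend1
  set c := ∑ j, π j * y 0 j with hc
  have hinv : ∀ t, ∑ j, π j * y t j = c := by
    intro t
    induction t with
    | zero => rfl
    | succ t ih =>
      rw [← ih, hy t]
      simp only [Matrix.mulVec, dotProduct]
      calc ∑ j, π j * ∑ k, M j k * y t k
          = ∑ j, ∑ k, π j * M j k * y t k := by
            refine Finset.sum_congr rfl (fun j _ => ?_)
            rw [Finset.mul_sum]
            exact Finset.sum_congr rfl (fun k _ => by ring)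
        _ = ∑ k, ∑ j, π j * M j k * y t k := Finset.sum_comm
        _ = ∑ k, (∑ j, π j * M j k) * y t k := by
            refine Finset.sum_congr rfl (fun k _ => ?_)
            rw [Finset.sum_mul]
        _ = ∑ k, π k * y t k := by
            refine Finset.sum_congr rfl (fun k _ => ?_)
            rw [hπs k]
  have hcbound : ∀ t, Finset.univ.inf' Finset.univ_nonempty (y t) ≤ c ∧
      c ≤ Finset.univ.sup' Finset.univ_nonempty (y t) := by
    intro t
    rw [← hinv t]
    constructor
    · have h1 : ∑ j, π j * Finset.univ.inf' Finset.univ_nonempty (y t) ≤ ∑ j, π j * y t j :=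
        Finset.sum_le_sum (fun j _ =>
          mul_le_mul_of_nonneg_left (Finset.inf'_le _ (Finset.mem_univ j)) (hπ0 j))
      rwa [← Finset.sum_mul, hπ1, one_mul] at h1
    · have h1 : ∑ j, π j * y t j ≤ ∑ j, π j * Finset.univ.sup' Finset.univ_nonempty (y t) :=
        Finset.sum_le_sum (fun j _ =>
          mul_le_mul_of_nonneg_left (Finset.le_sup' _ (Finset.mem_univ j)) (hπ0 j))
      rwa [← Finset.sum_mul, hπ1, one_mul] at h1
  rw [tendsto_pi_nhds]
  intro i
  have hyi : Tendsto (fun t => y t i) atTop (nhds c) := by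
    rw [← tendsto_sub_nhds_zero_iff]
    apply squeeze_zero_norm ?_ hosctend
    intro t
    have h1 := (hcbound t).1
    have h2 := (hcbound t).2
    have h3 : y t i ≤ Finset.univ.sup' Finset.univ_nonempty (y t) :=
      Finset.le_sup' _ (Finset.mem_univ i)
    have h4 : Finset.univ.inf' Finset.univ_nonempty (y t) ≤ y t i :=
      Finset.inf'_le _ (Finset.mem_univ i)
    rw [Real.norm_eq_abs, abs_sub_le_iff]
    simp only [hoscdef]
    constructor <;> linarith
  have hL : (if i ∈ S then (1:ℝ) else -1) *
      (∑ j, (if j ∈ S then π j else -π j) * (x 0 j - 1/2)) + 1/2 = σ i * c + 1/2 := by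
    have hsum : ∑ j, (if j ∈ S then π j else -π j) * (x 0 j - 1/2) = c := by
      rw [hc]
      refine Finset.sum_congr rfl (fun j _ => ?_)
      simp only [hydef, hσdef]
      by_cases hj : j ∈ S <;> simp [hj] <;> ring
    rw [hsum, hσdef]
  rw [hL]
  have hxeq : (fun t => x t i) = fun t => σ i * y t i + 1/2 := by
    funext t
    simp only [hydef]
    linear_combination (1/2 - x t i) * (hσ2 i)
  rw [hxeq]
  exact (hyi.const_mul (σ i)).add_const (1/2)
end
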